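/- (Weierstrass) Let a : ℕ → ℝ be a sequence of nonzero real numbers and define b : ℕ → ℝ by a (k+1) / a k = 1 + b k, i.e. b k := a (k+1) / a k − 1. If the series ∑ |b k| converges (i.e. the sequence (|b k|) is summable), then the series ∑ a k diverges (i.e. (a k) is not summable). -/

import Mathlib

lemma abs_log_one_add_le {x : ℝ} (hx : |x| ≤ 1/2) : |Real.log (1 + x)| ≤ 2 * |x| := by
  have h1 : -(1/2 : ℝ) ≤ x := (abs_le.mp hx).1
  have h2 : x ≤ 1/2 := (abs_le.mp hx).2
  have hpos : (0:ℝ) < 1 + x := by linarith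
  have hub : Real.log (1 + x) ≤ x := by
    have := Real.log_le_sub_one_of_pos hpos
    linarith
  have hlb : x / (1 + x) ≤ Real.log (1 + x) := by
    have hinv : (0:ℝ) < (1 + x)⁻¹ := by positivity
    have := Real.log_le_sub_one_of_pos hinv
    rw [Real.log_inv] at this
    have : -Real.log (1 + x) ≤ (1 + x)⁻¹ - 1 := this
    have hx' : (1 + x)⁻¹ - 1 = -(x / (1 + x)) := by
      field_simp
      ring
    linarith [this, hx'.symm ▸ this]
  rw [abs_le]
  constructor
  · have hb : |x / (1 + x)| ≤ 2 * |x| := by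
      rw [abs_div]
      rw [div_le_iff₀ (abs_pos.mpr (ne_of_gt hpos))]
      have : (1/2 : ℝ) ≤ |1 + x| := by
        rw [abs_of_pos hpos]; linarith
      nlinarith [abs_nonneg x]
    have := (abs_le.mp hb).1
    linarith
  · calc Real.log (1 + x) ≤ x := hub
      _ ≤ |x| := le_abs_self x
      _ ≤ 2 * |x| := by linarith [abs_nonneg x]

theorem weierstrass_not_summable (a b : ℕ → ℝ)
    (ha : ∀ k, a k ≠ 0)
    (hb : ∀ k, b k = a (k + 1) / a k - 1)
    (hsum : Summable fun k => |b k|) :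
    ¬ Summable a := by
  intro hS
  set c : ℕ → ℝ := fun k => Real.log |a (k + 1)| - Real.log |a k| with hc
  have hceq : ∀ k, c k = Real.log (1 + b k) := by
    intro k
    have h1 : 1 + b k = a (k + 1) / a k := by rw [hb k]; ring
    have : Real.log |a (k+1)| - Real.log |a k| = Real.log (|a (k+1)| / |a k|) := by
      rw [Real.log_div (abs_ne_zero.mpr (ha _)) (abs_ne_zero.mpr (ha _))]
    show Real.log |a (k + 1)| - Real.log |a k| = Real.log (1 + b k)
    rw [this, ← abs_div, Real.log_abs, ← h1]
  -- c is summable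
  have hbz : Filter.Tendsto (fun k => |b k|) Filter.cofinite (nhds 0) :=
    hsum.tendsto_cofinite_zero
  have hev : ∀ᶠ k in Filter.cofinite, ‖c k‖ ≤ 2 * |b k| := by
    filter_upwards [hbz.eventually (gt_mem_nhds (by norm_num : (0:ℝ) < 1/2))] with k hk
    rw [hceq k, Real.norm_eq_abs]
    exact abs_log_one_add_le (le_of_lt hk)
  have hsc : Summable c :=
    Summable.of_norm_bounded_eventually (hsum.mul_left 2) hev
  -- partial sums of c telescope to log |a n| - log |a 0|
  obtain ⟨S, hSsum⟩ := hsc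
  have htel : ∀ n, ∑ k ∈ Finset.range n, c k = Real.log |a n| - Real.log |a 0| := by
    intro n
    exact Finset.sum_range_sub (fun k => Real.log |a k|) n
  have hlim : Filter.Tendsto (fun n => Real.log |a n|) Filter.atTop
      (nhds (S + Real.log |a 0|)) := by
    have := hSsum.tendsto_sum_nat
    simp only [htel] at this
    have := this.add_const (Real.log |a 0|)
    simpa using this
  -- but summability of a forces log |a n| → -∞
  have ha0 : Filter.Tendsto a Filter.atTop (nhds 0) := hS.tendsto_atTop_zero
  have ha0' : Filter.Tendsto a Filter.atTop (nhdsWithin 0 {(0:ℝ)}ᶜ) :=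
    Filter.tendsto_inf.mpr ⟨ha0, Filter.tendsto_principal.mpr
      (Filter.Eventually.of_forall fun n => ha n)⟩
  have hbot : Filter.Tendsto (fun n => Real.log |a n|) Filter.atTop Filter.atBot := by
    simp only [Real.log_abs]
    exact Real.tendsto_log_nhdsNE_zero.comp ha0'
  exact not_tendsto_nhds_of_tendsto_atBot hbot _ hlim
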